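/- Let q > n ≥ 1 be integers, let γ ∈ ℝ, and let λ_1, …, λ_q be real numbers such that for every subset J ⊆ {1,…,q} with #J = n+1 one has min_{j∈J} λ_j ≤ γ. Then Σ_{i=1}^q λ_i ≤ max_{I ⊆ {1,…,q}, #I = n} Σ_{i∈I} λ_i + (q−n)·γ. -/
import Mathlib

/-- Existence of a "top-k" subset: a subset of `s` of cardinality `k` on which
`lam` dominates the rest of `s`. -/
lemma exists_top_subset {α : Type*} [DecidableEq α] (lam : α → ℝ) :
    ∀ (k : ℕ) (s : Finset α), k ≤ s.card →
      ∃ I ⊆ s, I.card = k ∧ ∀ i ∈ s, i ∉ I → ∀ j ∈ I, lam i ≤ lam j := by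
  intro k
  induction k with
  | zero =>
      intro s _
      exact ⟨∅, Finset.empty_subset s, rfl, by simp⟩
  | succ k ih =>
      intro s hk
      have hs : s.Nonempty := Finset.card_pos.mp (by omega)
      obtain ⟨j0, hj0s, hj0⟩ := s.exists_max_image lam hs
      have hcard : k ≤ (s.erase j0).card := by
        rw [Finset.card_erase_of_mem hj0s]; omega
      obtain ⟨I, hIsub, hIcard, hIdom⟩ := ih (s.erase j0) hcard
      have hj0nI : j0 ∉ I := fun h => (Finset.mem_erase.mp (hIsub h)).1 rfl
      refine ⟨insert j0 I, ?_, ?_, ?_⟩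
      · intro x hx
        rcases Finset.mem_insert.mp hx with h | h
        · exact h ▸ hj0s
        · exact Finset.mem_of_mem_erase (hIsub h)
      · rw [Finset.card_insert_of_notMem hj0nI, hIcard]
      · intro i his hiI j hj
        rcases Finset.mem_insert.mp hj with h | h
        · exact h ▸ hj0 i his
        · exact hIdom i (Finset.mem_erase.mpr ⟨fun he => hiI (he ▸ Finset.mem_insert_self _ _), his⟩)
            (fun hc => hiI (Finset.mem_insert_of_mem hc)) j h

/-- **(Combinatorial core of the Weil-function inequality for divisors in
general position.)**  Let `q > n ≥ 1` be integers, let `γ` be a real number,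
and let `λ 1, …, λ q` be real numbers such that for every subset
`J ⊆ {1,…,q}` with `#J = n + 1` one has `min_{j ∈ J} λ j ≤ γ`.  Then
`∑ i, λ i ≤ max_{#I = n} ∑_{i ∈ I} λ i + (q − n)·γ`. -/
theorem sum_le_max_subset_sum_add_of_min_le
    (q n : ℕ) (hn : 1 ≤ n) (hq : n < q) (γ : ℝ) (lam : Fin q → ℝ)
    (hmin : ∀ J : Finset (Fin q), ∀ hJ : J.card = n + 1,
      J.inf' (Finset.card_pos.mp (by omega)) lam ≤ γ) :
    ∑ i, lam i ≤
      (Finset.univ.powersetCard n).sup'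
          (Finset.powersetCard_nonempty.mpr (by simpa using hq.le))
          (fun I => ∑ i ∈ I, lam i)
        + ((q : ℝ) - n) * γ := by
  obtain ⟨I, -, hIcard, hIdom⟩ :=
    exists_top_subset lam n (Finset.univ : Finset (Fin q))
      (by simpa using hq.le)
  -- every element outside I satisfies lam i ≤ γ
  have hout : ∀ i ∉ I, lam i ≤ γ := by
    intro i hiI
    set J : Finset (Fin q) := insert i I with hJ
    have hJcard : J.card = n + 1 := by
      rw [Finset.card_insert_of_notMem hiI, hIcard]
    have hle := hmin J hJcard
    refine le_trans ?_ hle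
    apply Finset.le_inf'
    intro b hb
    rcases Finset.mem_insert.mp hb with h | h
    · exact h ▸ le_refl _
    · exact hIdom i (Finset.mem_univ i) hiI b h
  have hsplit : ∑ i, lam i = ∑ i ∈ I, lam i + ∑ i ∈ Iᶜ, lam i :=
    (Finset.sum_add_sum_compl I lam).symm
  have h1 : ∑ i ∈ I, lam i ≤
      (Finset.univ.powersetCard n).sup'
        (Finset.powersetCard_nonempty.mpr (by simpa using hq.le))
        (fun I => ∑ i ∈ I, lam i) := by
    exact Finset.le_sup' (f := fun I => ∑ i ∈ I, lam i)
      (by simp [Finset.mem_powersetCard, hIcard])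
  have hcardc : (Iᶜ : Finset (Fin q)).card = q - n := by
    rw [Finset.card_compl, hIcard]; simp
  have h2 : ∑ i ∈ Iᶜ, lam i ≤ ((q : ℝ) - n) * γ := by
    calc ∑ i ∈ Iᶜ, lam i ≤ ∑ _i ∈ Iᶜ, γ :=
          Finset.sum_le_sum fun i hi => hout i (Finset.mem_compl.mp hi)
      _ = ((q - n : ℕ) : ℝ) * γ := by rw [Finset.sum_const, hcardc, nsmul_eq_mul]
      _ = ((q : ℝ) - n) * γ := by
          congr 1
          push_cast [Nat.cast_sub hq.le]
          ring
  rw [hsplit]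
  exact add_le_add h1 h2
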